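/- For g_B(z) = z + B + 1/z with |B| > 3: if |z| > 1 and Re(z/B) > 0, then |g_B(z)| > 2|B|/3 > 1 and Re(g_B(z)/B) > 2/3. -/

import Mathlib

theorem stmt_8 (B z : ℂ) (hB : 3 < ‖B‖) (hz : 1 < ‖z‖)
    (hre : 0 < (z / B).re) :
    2 * ‖B‖ / 3 < ‖z + B + 1 / z‖ ∧
      1 < 2 * ‖B‖ / 3 ∧
      2 / 3 < ((z + B + 1 / z) / B).re := by
  have hB0 : B ≠ 0 := by
    intro h; simp [h] at hB; linarith
  have hz0 : z ≠ 0 := by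
    intro h; simp [h] at hz; linarith
  have habsB : (0:ℝ) < ‖B‖ := by positivity
  have habsz : (0:ℝ) < ‖z‖ := by positivity
  have hsmall : ‖1 / z / B‖ < 1/3 := by
    rw [norm_div, norm_div, norm_one]
    rw [div_div]
    rw [div_lt_iff₀ (by positivity)]
    nlinarith
  have hre2 : 2 / 3 < ((z + B + 1 / z) / B).re := by
    have : (z + B + 1/z)/B = z/B + 1 + (1/z)/B := by
      field_simp
    rw [this]
    have h1 : |((1/z)/B).re| ≤ ‖(1/z)/B‖ := Complex.abs_re_le_norm _
    have h2 := neg_abs_le ((1/z/B).re)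
    simp only [Complex.add_re, Complex.one_re]
    linarith
  refine ⟨?_, by linarith, hre2⟩
  have hle : ((z + B + 1 / z) / B).re ≤ ‖(z + B + 1/z)/B‖ :=
    Complex.re_le_norm _
  rw [norm_div] at hle
  rw [le_div_iff₀ habsB] at hle
  nlinarith
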